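/- Let G be a finite group that is generalized quasi-dihedral on an abelian subgroup K and an element b. Then for every generating set S of G with 1 ∉ S, the Cayley graph Cay(G,S) has a Hamiltonian path, i.e., a path visiting every vertex of Cay(G,S) exactly once. -/

import Mathlib

/-- `G` is generalized quasi-dihedral on the abelian subgroup `K` and the element `b`:
`K` is abelian of index 2, `b ∉ K`, `b` has finite order, and conjugation by `b`
inverts every element of `K`. -/
def IsGQD {G : Type*} [Group G] (K : Subgroup G) (b : G) : Prop :=
  (∀ x ∈ K, ∀ y ∈ K, x * y = y * x) ∧
  K.index = 2 ∧ b ∉ K ∧ IsOfFinOrder b ∧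
  ∀ k ∈ K, b * k * b⁻¹ = k⁻¹

/-- The Cayley graph of `G` with respect to `S`: vertices are elements of `G`,
and `g, h` are adjacent iff `g ≠ h` and `g⁻¹ * h ∈ S ∪ S⁻¹`. -/
def cayleyGraph {G : Type*} [Group G] (S : Set G) : SimpleGraph G where
  Adj g h := g ≠ h ∧ g⁻¹ * h ∈ S ∪ S⁻¹
  symm := by
    constructor
    rintro g h ⟨hne, hmem⟩
    refine ⟨hne.symm, ?_⟩
    have h' : h⁻¹ * g = (g⁻¹ * h)⁻¹ := by group
    rcases hmem with hs | hs
    · exact Or.inr (by rw [h']; simpa [Set.mem_inv] using hs)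
    · exact Or.inl (by rw [h']; exact Set.mem_inv.mp hs)
  loopless := by constructor; rintro g ⟨hne, -⟩; exact hne rfl

namespace GQDHam

variable {G : Type*} [Group G]

open Subgroup List Pointwise

/-- The edge relation used for paths inside an "abelian layer". -/
def relA (T : Finset G) (x y : G) : Prop := x ≠ y ∧ (x⁻¹ * y ∈ T ∨ y⁻¹ * x ∈ T)

lemma relA_symm {T : Finset G} {x y : G} (h : relA T x y) : relA T y x :=
  ⟨h.1.symm, h.2.symm⟩

lemma relA_left {T : Finset G} (c : G) {x y : G} (h : relA T x y) : relA T (c * x) (c * y) := by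
  obtain ⟨h1, h2⟩ := h
  refine ⟨fun he => h1 (mul_left_cancel he), ?_⟩
  have e : (c * x)⁻¹ * (c * y) = x⁻¹ * y := by group
  have e' : (c * y)⁻¹ * (c * x) = y⁻¹ * x := by group
  rw [e, e']; exact h2

lemma relA_mono {T T' : Finset G} (hTT : T ⊆ T') {x y : G} (h : relA T x y) : relA T' x y :=
  ⟨h.1, h.2.imp (fun hx => hTT hx) (fun hx => hTT hx)⟩

/-- The edge relation for the two-level (bipartite-with-layers) structure. -/
def crel (D W : Finset G) : G × Bool → G × Bool → Prop
  | (x, false), (y, false) => x ≠ y ∧ (x⁻¹ * y ∈ D ∨ y⁻¹ * x ∈ D)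
  | (x, true), (y, true) => x ≠ y ∧ (x⁻¹ * y ∈ D ∨ y⁻¹ * x ∈ D)
  | (x, false), (y, true) => x⁻¹ * y ∈ W
  | (x, true), (y, false) => y⁻¹ * x ∈ W

lemma crel_mono {D W W' : Finset G} (hW : W' ⊆ W) {p q : G × Bool}
    (h : crel D W' p q) : crel D W p q := by
  obtain ⟨x, bx⟩ := p
  obtain ⟨y, by'⟩ := q
  cases bx <;> cases by' <;> simp only [crel] at h ⊢
  · exact h
  · exact hW h
  · exact hW h
  · exact h

lemma crel_left {D W : Finset G} (c : G) {p q : G × Bool} (h : crel D W p q) :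
    crel D W (c * p.1, p.2) (c * q.1, q.2) := by
  obtain ⟨x, bx⟩ := p
  obtain ⟨y, by'⟩ := q
  have e : (c * x)⁻¹ * (c * y) = x⁻¹ * y := by group
  have e' : (c * y)⁻¹ * (c * x) = y⁻¹ * x := by group
  cases bx <;> cases by' <;> simp only [crel] at h ⊢ <;>
    [skip; rw [e]; rw [e']; skip] <;>
    first
      | (exact ⟨fun he => h.1 (mul_left_cancel he), by rw [e, e']; exact h.2⟩)
      | exact h

/-- Decomposition of `⟨insert t H⟩` into cosets `t^i H`, `i < d`, when `t` commutes with `H`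
and `t^d ∈ H`. -/
lemma coset_decomp (H : Subgroup G) (t : G) (hc : ∀ h ∈ H, t * h = h * t)
    (d : ℕ) (hd0 : 0 < d) (hdH : t ^ d ∈ H) :
    ∀ x, x ∈ Subgroup.closure (insert t (H : Set G)) ↔ ∃ i < d, ∃ h ∈ H, x = t ^ i * h := by
  have hcm : ∀ h ∈ H, ∀ n : ℕ, t ^ n * h = h * t ^ n := by
    intro h hh n
    exact ((Commute.pow_left (hc h hh) n))
  intro x
  constructor
  · intro hx
    let V : Subgroup G :=
      { carrier := {x | ∃ i < d, ∃ h ∈ H, x = t ^ i * h}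
        one_mem' := ⟨0, hd0, 1, H.one_mem, by simp⟩
        mul_mem' := by
          rintro x y ⟨i, hi, h, hh, rfl⟩ ⟨j, hj, h', hh', rfl⟩
          have key : t ^ i * h * (t ^ j * h') = t ^ (i + j) * (h * h') := by
            have : h * t ^ j = t ^ j * h := (hcm h hh j).symm
            rw [mul_assoc (t ^ i), ← mul_assoc h, this, pow_add]
            group
          by_cases hij : i + j < d
          · exact ⟨i + j, hij, h * h', H.mul_mem hh hh', key⟩
          · refine ⟨i + j - d, by omega, t ^ d * (h * h'), H.mul_mem hdH (H.mul_mem hh hh'), ?_⟩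
            rw [key]
            have e2 : t ^ (i + j) = t ^ (i + j - d) * t ^ d := by
              rw [← pow_add]; congr 1; omega
            rw [e2, mul_assoc]
        inv_mem' := by
          rintro x ⟨i, hi, h, hh, rfl⟩
          rcases Nat.eq_zero_or_pos i with rfl | hpos
          · exact ⟨0, hd0, h⁻¹, H.inv_mem hh, by simp⟩
          · refine ⟨d - i, by omega, (t ^ d)⁻¹ * h⁻¹,
              H.mul_mem (H.inv_mem hdH) (H.inv_mem hh), ?_⟩
            have e1 : t ^ (d - i) * ((t ^ d)⁻¹ * h⁻¹) = (t ^ i)⁻¹ * h⁻¹ := by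
              rw [← mul_assoc]
              congr 1
              have : t ^ d = t ^ (d - i) * t ^ i := by rw [← pow_add]; congr 1; omega
              rw [this]
              group
            rw [e1, mul_inv_rev]
            exact ((((show Commute t h from hc h hh).pow_left i).inv_inv).eq).symm
      }
    have hle : Subgroup.closure (insert t (H : Set G)) ≤ V := by
      rw [Subgroup.closure_le]
      rintro y (rfl | hyH)
      · by_cases h1 : 1 < d
        · exact ⟨1, h1, 1, H.one_mem, by simp⟩
        · have hd1 : d = 1 := by omega
          have : y ∈ H := by rw [← pow_one y, ← hd1]; exact hdH
          exact ⟨0, hd0, y, this, by simp⟩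
      · exact ⟨0, hd0, y, hyH, by simp⟩
    exact hle hx
  · rintro ⟨i, hi, h, hh, rfl⟩
    exact mul_mem (pow_mem (Subgroup.subset_closure (Set.mem_insert _ _)) i)
      (Subgroup.subset_closure (Set.mem_insert_of_mem _ hh))

lemma coset_disj (H : Subgroup G) {t : G} {d : ℕ}
    (hmin : ∀ m, 0 < m → m < d → t ^ m ∉ H) {i j : ℕ} (hij : i < j) (hjd : j < d)
    {h h' : G} (hh : h ∈ H) (hh' : h' ∈ H) (heq : t ^ i * h = t ^ j * h') : False := by
  have e1 : t ^ j = t ^ i * t ^ (j - i) := by rw [← pow_add]; congr 1; omega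
  rw [e1, mul_assoc] at heq
  have h2 : h = t ^ (j - i) * h' := mul_left_cancel heq
  have h3 : t ^ (j - i) = h * h'⁻¹ := by rw [h2]; group
  exact hmin (j - i) (by omega) (by omega) (h3 ▸ H.mul_mem hh (H.inv_mem hh'))

/-- Hamiltonian-path lemma for "abelian" Cayley-type graphs: there is a list passing through
each element of `closure T` exactly once, along edges of `relA T`. -/
lemma lemA [Finite G] [DecidableEq G] :
    ∀ T : Finset G,
    (∀ x ∈ Subgroup.closure (T : Set G), ∀ y ∈ Subgroup.closure (T : Set G), x * y = y * x) →
    ∃ l : List G, l ≠ [] ∧ l.Chain' (relA T) ∧ l.Nodup ∧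
      ∀ x : G, x ∈ l ↔ x ∈ Subgroup.closure (T : Set G) := by
  intro T
  induction T using Finset.strongInduction with
  | _ T ih =>
  intro hc
  classical
  by_cases hred : ∃ t ∈ T,
      Subgroup.closure ((T.erase t : Finset G) : Set G) = Subgroup.closure (T : Set G)
  · obtain ⟨t, ht, hcl⟩ := hred
    obtain ⟨l, hne, hch, hnd, hmem⟩ := ih (T.erase t) (Finset.erase_ssubset ht)
      (by rw [hcl]; exact hc)
    exact ⟨l, hne, hch.imp (fun a b hab => relA_mono (Finset.erase_subset _ _) hab), hnd,
      fun x => (hmem x).trans (by rw [hcl])⟩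
  · rcases T.eq_empty_or_nonempty with rfl | ⟨t, ht⟩
    · refine ⟨[1], by simp, List.isChain_singleton _, by simp, fun x => ?_⟩
      simp [Subgroup.closure_empty, Subgroup.mem_bot]
    · set H := Subgroup.closure ((T.erase t : Finset G) : Set G) with hHdef
      have hHle : H ≤ Subgroup.closure (T : Set G) :=
        Subgroup.closure_mono (Finset.coe_subset.mpr (Finset.erase_subset _ _))
      have htT : t ∈ Subgroup.closure (T : Set G) := Subgroup.subset_closure ht
      have htH : t ∉ H := by
        intro hmem
        apply hred
        refine ⟨t, ht, le_antisymm hHle ?_⟩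
        rw [Subgroup.closure_le]
        intro s hs
        rcases eq_or_ne s t with rfl | hst
        · exact hmem
        · exact Subgroup.subset_closure (Finset.mem_coe.mpr (Finset.mem_erase.mpr ⟨hst, hs⟩))
      have ht1 : t ≠ 1 := fun h => htH (h ▸ H.one_mem)
      have hcomm : ∀ h ∈ H, t * h = h * t := fun h hh => hc t htT h (hHle hh)
      have hex : ∃ j, 0 < j ∧ t ^ j ∈ H :=
        ⟨orderOf t, orderOf_pos t, by rw [pow_orderOf_eq_one]; exact H.one_mem⟩
      set d := Nat.find hex with hdd
      have hd0 : 0 < d := (Nat.find_spec hex).1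
      have hdH : t ^ d ∈ H := (Nat.find_spec hex).2
      have hmin : ∀ m, 0 < m → m < d → t ^ m ∉ H := by
        intro m hm0 hmd hmH
        exact Nat.find_min hex hmd ⟨hm0, hmH⟩
      obtain ⟨l, hne, hch, hnd, hmem⟩ := ih (T.erase t) (Finset.erase_ssubset ht)
        (fun x hx y hy => hc x (hHle hx) y (hHle hy))
      set h0 := l.head hne with hh0def
      set ln := l.getLast hne with hlndef
      have hh0 : l.head? = some h0 := List.head?_eq_head hne
      have hlst : l.getLast? = some ln := List.getLast?_eq_getLast hne
      have h0H : h0 ∈ H := (hmem h0).1 (List.head_mem hne)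
      have lnH : ln ∈ H := (hmem ln).1 (List.getLast_mem hne)
      have hchT : l.Chain' (relA T) :=
        hch.imp (fun a b hab => relA_mono (Finset.erase_subset _ _) hab)
      have hchR : l.reverse.Chain' (relA T) :=
        List.isChain_reverse.mpr (hchT.imp (fun a b hab => relA_symm hab))
      -- the snake
      have main : ∀ j, j < d → ∃ Q : List G,
          Q.Chain' (relA T) ∧ Q.Nodup ∧
          Q.head? = some h0 ∧
          Q.getLast? = some (t ^ j * (if Even j then ln else h0)) ∧
          ∀ x, x ∈ Q ↔ ∃ i ≤ j, ∃ h ∈ H, x = t ^ i * h := by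
        intro j
        induction j with
        | zero =>
          intro _
          refine ⟨l, hchT, hnd, hh0, by simpa using hlst, fun x => ?_⟩
          constructor
          · intro hx
            exact ⟨0, le_refl 0, x, (hmem x).1 hx, by simp⟩
          · rintro ⟨i, hi, h, hh, rfl⟩
            have : i = 0 := Nat.le_zero.mp hi
            subst this
            simpa using (hmem h).2 hh
        | succ j ihj =>
          intro hj1
          obtain ⟨Q, hQch, hQnd, hQhd, hQlst, hQmem⟩ := ihj (by omega)
          set base : G := if Even j then ln else h0 with hbase
          have hbaseH : base ∈ H := by
            rw [hbase]; split <;> assumption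
          set blk : List G := (if Even j then l.reverse else l).map (fun x => t ^ (j+1) * x)
            with hblk
          have hbase_mem : base ∈ l := by
            rw [hbase]; split
            · exact List.getLast_mem hne
            · exact List.head_mem hne
          have hblk_hd : blk.head? = some (t ^ (j+1) * base) := by
            rw [hblk, hbase]
            by_cases hEj : Even j
            · simp [hEj, List.head?_map, List.head?_reverse, hlst]
            · simp [hEj, List.head?_map, hh0]
          have hblk_lst : blk.getLast? =
              some (t ^ (j+1) * (if Even (j+1) then ln else h0)) := by
            rw [hblk]
            by_cases hEj : Even j
            · simp [hEj, List.getLast?_map, List.getLast?_reverse, hh0, Nat.even_add_one]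
            · simp [hEj, List.getLast?_map, hlst, Nat.even_add_one]
          have hblk_ch : blk.Chain' (relA T) := by
            rw [hblk]
            apply (List.isChain_map _).mpr
            split
            · exact hchR.imp (fun a b hab => relA_left _ hab)
            · exact hchT.imp (fun a b hab => relA_left _ hab)
          have hblk_nd : blk.Nodup := by
            rw [hblk]
            apply List.Nodup.map_on
            · intro x _ y _ hxy
              exact mul_left_cancel hxy
            · split
              · exact List.nodup_reverse.mpr hnd
              · exact hnd
          have hblk_mem : ∀ x, x ∈ blk ↔ ∃ h ∈ H, x = t ^ (j+1) * h := by
            intro x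
            rw [hblk]
            constructor
            · intro hx
              obtain ⟨y, hy, rfl⟩ := List.mem_map.mp hx
              have hyl : y ∈ l := by
                by_cases hEj : Even j
                · rw [if_pos hEj] at hy; exact List.mem_reverse.mp hy
                · rwa [if_neg hEj] at hy
              exact ⟨y, (hmem y).1 hyl, rfl⟩
            · rintro ⟨h, hh, rfl⟩
              apply List.mem_map.mpr
              refine ⟨h, ?_, rfl⟩
              by_cases hEj : Even j
              · rw [if_pos hEj]; exact List.mem_reverse.mpr ((hmem h).2 hh)
              · rw [if_neg hEj]; exact (hmem h).2 hh
          refine ⟨Q ++ blk, ?_, ?_, ?_, ?_, ?_⟩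
          · show List.IsChain _ _; rw [List.isChain_append]
            refine ⟨hQch, hblk_ch, ?_⟩
            intro x hx y hy
            rw [hQlst] at hx
            rw [hblk_hd] at hy
            simp only [Option.mem_def, Option.some_inj] at hx hy
            subst hx; subst hy
            constructor
            · intro he
              have h1 : t ^ j = t ^ (j+1) := mul_right_cancel he
              rw [pow_succ] at h1
              have h2 : t ^ j * 1 = t ^ j * t := by simpa using h1
              exact ht1 (mul_left_cancel h2).symm
            · left
              have e : (t ^ j * base)⁻¹ * (t ^ (j+1) * base) = base⁻¹ * (t * base) := by
                rw [pow_succ]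
                group
              rw [e, hcomm base hbaseH]
              simpa using ht
          · refine List.Nodup.append hQnd hblk_nd ?_
            intro x hxQ hxB
            obtain ⟨i, hi, h, hh, rfl⟩ := (hQmem x).1 hxQ
            obtain ⟨h', hh', heq⟩ := (hblk_mem _).1 hxB
            exact coset_disj H hmin (by omega : i < j + 1) (by omega) hh hh' heq
          · rw [List.head?_append, hQhd]
            rfl
          · rw [List.getLast?_append, hblk_lst]
            rfl
          · intro x
            rw [List.mem_append, hQmem, hblk_mem]
            constructor
            · rintro (⟨i, hi, h, hh, rfl⟩ | ⟨h, hh, rfl⟩)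
              · exact ⟨i, by omega, h, hh, rfl⟩
              · exact ⟨j+1, le_refl _, h, hh, rfl⟩
            · rintro ⟨i, hi, h, hh, rfl⟩
              rcases Nat.lt_or_ge i (j+1) with hlt | hge
              · exact Or.inl ⟨i, by omega, h, hh, rfl⟩
              · have : i = j + 1 := by omega
                subst this
                exact Or.inr ⟨h, hh, rfl⟩
      obtain ⟨Q, hQch, hQnd, hQhd, hQlst, hQmem⟩ := main (d-1) (by omega)
      have hclT : Subgroup.closure (T : Set G) = Subgroup.closure (insert t (H : Set G)) := by
        have h1 : (T : Set G) = insert t ((T.erase t : Finset G) : Set G) := by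
          rw [← Finset.coe_insert, Finset.insert_erase ht]
        rw [h1, Set.insert_eq, Set.insert_eq, Subgroup.closure_union, Subgroup.closure_union,
          Subgroup.closure_eq]
      have hQne : Q ≠ [] := by
        intro h
        rw [h] at hQhd
        simp at hQhd
      refine ⟨Q, hQne, hQch, hQnd, fun x => ?_⟩
      rw [hQmem x, hclT, coset_decomp H t hcomm d hd0 hdH x]
      constructor
      · rintro ⟨i, hi, h, hh, rfl⟩
        exact ⟨i, by omega, h, hh, rfl⟩
      · rintro ⟨i, hi, h, hh, rfl⟩
        exact ⟨i, by omega, h, hh, rfl⟩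

/-- Hamiltonian-path lemma for the two-level structure: levels are joined by `W`-edges
(`1 ∈ W`), and inside each level we may use `D`-edges. -/
lemma lemC [Finite G] [DecidableEq G] (D : Finset G) :
    ∀ W : Finset G, (1:G) ∈ W →
    (∀ x ∈ Subgroup.closure ((D : Set G) ∪ (W : Set G) * ((W : Set G))⁻¹),
     ∀ y ∈ Subgroup.closure ((D : Set G) ∪ (W : Set G) * ((W : Set G))⁻¹), x * y = y * x) →
    ∃ (P : List (G × Bool)) (q1 p0 : G),
      P.Chain' (crel D W) ∧ P.Nodup ∧
      P.head? = some (q1, true) ∧ P.getLast? = some (p0, false) ∧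
      ∀ v : G × Bool, v ∈ P ↔
        v.1 ∈ Subgroup.closure ((D : Set G) ∪ (W : Set G) * ((W : Set G))⁻¹) := by
  intro W
  induction W using Finset.strongInduction with
  | _ W ih =>
  intro hone hc
  classical
  by_cases hw : ∃ w ∈ W, w ≠ 1
  · -- inductive step
    obtain ⟨w, hwW, hw1⟩ := hw
    set W' := W.erase w with hW'def
    have hone' : (1:G) ∈ W' := Finset.mem_erase.mpr ⟨Ne.symm hw1, hone⟩
    have hW'W : ((W' : Finset G) : Set G) ⊆ (W : Set G) :=
      Finset.coe_subset.mpr (Finset.erase_subset _ _)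
    set L := Subgroup.closure ((D : Set G) ∪ (W : Set G) * ((W : Set G))⁻¹) with hL
    set L' := Subgroup.closure ((D : Set G) ∪ (W' : Set G) * ((W' : Set G))⁻¹) with hL'
    have hL'L : L' ≤ L := by
      rw [hL', hL]
      apply Subgroup.closure_mono
      rintro x (hx | hx)
      · exact Or.inl hx
      · obtain ⟨u, hu, v, hv, rfl⟩ := Set.mem_mul.mp hx
        refine Or.inr (Set.mem_mul.mpr ⟨u, hW'W hu, v, ?_, rfl⟩)
        rw [Set.mem_inv] at hv ⊢
        exact hW'W hv
    have honeinv : (1:G) ∈ ((W : Finset G) : Set G)⁻¹ := by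
      rw [Set.mem_inv, inv_one]
      exact Finset.mem_coe.mpr hone
    have hmemWL : ∀ u ∈ W, (u : G) ∈ L := by
      intro u hu
      apply Subgroup.subset_closure
      exact Or.inr (Set.mem_mul.mpr ⟨u, Finset.mem_coe.mpr hu, 1, honeinv, mul_one u⟩)
    have hwL : w ∈ L := hmemWL w hwW
    have hmemW'L' : ∀ u ∈ W', (u : G) ∈ L' := by
      intro u hu
      apply Subgroup.subset_closure
      refine Or.inr (Set.mem_mul.mpr ⟨u, Finset.mem_coe.mpr hu, 1, ?_, mul_one u⟩)
      rw [Set.mem_inv, inv_one]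
      exact Finset.mem_coe.mpr hone'
    obtain ⟨P, q1, p0, hPch', hPnd, hPhd, hPlst, hPmem⟩ :=
      ih W' (Finset.erase_ssubset hwW) hone' (fun x hx y hy => hc x (hL'L hx) y (hL'L hy))
    have hPch : P.Chain' (crel D W) :=
      hPch'.imp (fun a b hab => crel_mono (Finset.erase_subset _ _) hab)
    have hq1 : q1 ∈ L' := (hPmem (q1, true)).1 (List.mem_of_mem_head? (by rw [hPhd]; rfl))
    have hp0 : p0 ∈ L' := (hPmem (p0, false)).1 (List.mem_of_mem_getLast? (by rw [hPlst]; rfl))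
    have hex : ∃ j, 0 < j ∧ w ^ j ∈ L' :=
      ⟨orderOf w, orderOf_pos w, by rw [pow_orderOf_eq_one]; exact L'.one_mem⟩
    set d := Nat.find hex with hdd
    have hd0 : 0 < d := (Nat.find_spec hex).1
    have hdH : w ^ d ∈ L' := (Nat.find_spec hex).2
    have hmin : ∀ m, 0 < m → m < d → w ^ m ∉ L' :=
      fun m hm0 hmd hmH => Nat.find_min hex hmd ⟨hm0, hmH⟩
    have hcomm' : ∀ h ∈ L', w * h = h * w := fun h hh => hc w hwL h (hL'L hh)
    have hLL : L = Subgroup.closure (insert w (L' : Set G)) := by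
      apply _root_.le_antisymm
      · rw [hL, Subgroup.closure_le]
        have hWin : ∀ u : G, u ∈ (W : Set G) →
            u ∈ Subgroup.closure (insert w (L' : Set G)) := by
          intro u hu
          rcases eq_or_ne u w with rfl | hne
          · exact Subgroup.subset_closure (Set.mem_insert _ _)
          · have hu' : u ∈ W' := Finset.mem_erase.mpr ⟨hne, Finset.mem_coe.mp hu⟩
            exact Subgroup.subset_closure
              (Set.mem_insert_of_mem _ (SetLike.mem_coe.mpr (hmemW'L' u hu')))
        rintro x (hx | hx)
        · refine SetLike.mem_coe.mpr (Subgroup.subset_closure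
            (Set.mem_insert_of_mem _ (SetLike.mem_coe.mpr ?_)))
          exact Subgroup.subset_closure (Or.inl hx)
        · obtain ⟨u, hu, v, hv, rfl⟩ := Set.mem_mul.mp hx
          have hvW : v⁻¹ ∈ (W : Set G) := Set.mem_inv.mp hv
          have h1 : u ∈ Subgroup.closure (insert w (L' : Set G)) := hWin u hu
          have h2 : v ∈ Subgroup.closure (insert w (L' : Set G)) := by
            have := hWin v⁻¹ hvW
            simpa using (Subgroup.closure (insert w (L' : Set G))).inv_mem this
          exact SetLike.mem_coe.mpr (mul_mem h1 h2)
      · rw [Subgroup.closure_le]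
        rintro x (rfl | hx)
        · exact hwL
        · exact hL'L hx
    set c := p0 * q1⁻¹ * w with hcdef
    have ha' : p0 * q1⁻¹ ∈ L' := L'.mul_mem hp0 (L'.inv_mem hq1)
    have hcommaw : Commute (p0 * q1⁻¹) w := hc _ (hL'L ha') w hwL
    have hcpow : ∀ n : ℕ, c ^ n = w ^ n * (p0 * q1⁻¹) ^ n := by
      intro n
      calc c ^ n = (p0 * q1⁻¹) ^ n * w ^ n := hcommaw.mul_pow n
      _ = w ^ n * (p0 * q1⁻¹) ^ n := (hcommaw.pow_pow n n).eq
    have main : ∀ j, j < d → ∃ Q : List (G × Bool),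
        Q.Chain' (crel D W) ∧ Q.Nodup ∧
        Q.head? = some (q1, true) ∧
        Q.getLast? = some (c ^ j * p0, false) ∧
        ∀ v : G × Bool, v ∈ Q ↔ ∃ i ≤ j, ∃ h ∈ L', v.1 = w ^ i * h := by
      intro j
      induction j with
      | zero =>
        intro _
        refine ⟨P, hPch, hPnd, hPhd, by simpa using hPlst, fun v => ?_⟩
        rw [hPmem v]
        constructor
        · intro hv; exact ⟨0, le_refl 0, v.1, hv, by simp⟩
        · rintro ⟨i, hi, h, hh, he⟩
          have : i = 0 := Nat.le_zero.mp hi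
          subst this
          rw [he]
          simpa using hh
      | succ j ihj =>
        intro hj1
        obtain ⟨Q, hQch, hQnd, hQhd, hQlst, hQmem⟩ := ihj (by omega)
        have hblk_ch : (P.map (fun v => (c ^ (j+1) * v.1, v.2))).Chain' (crel D W) := by
          apply (List.isChain_map _).mpr
          exact hPch.imp (fun a b hab => crel_left _ hab)
        have hblk_hd : (P.map (fun v : G × Bool => (c ^ (j+1) * v.1, v.2))).head?
            = some (c ^ (j+1) * q1, true) := by
          rw [List.head?_map, hPhd]; rfl
        have hblk_lst : (P.map (fun v : G × Bool => (c ^ (j+1) * v.1, v.2))).getLast?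
            = some (c ^ (j+1) * p0, false) := by
          rw [List.getLast?_map, hPlst]; rfl
        have hblk_mem : ∀ v : G × Bool,
            v ∈ P.map (fun v : G × Bool => (c ^ (j+1) * v.1, v.2)) ↔
            ∃ h ∈ L', v.1 = w ^ (j+1) * h := by
          intro v
          constructor
          · intro hv
            obtain ⟨u, hu, rfl⟩ := List.mem_map.mp hv
            have hu1 : u.1 ∈ L' := (hPmem u).1 hu
            refine ⟨(p0 * q1⁻¹) ^ (j+1) * u.1, L'.mul_mem (pow_mem ha' _) hu1, ?_⟩
            dsimp only
            rw [hcpow, mul_assoc]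
          · rintro ⟨h, hh, he⟩
            apply List.mem_map.mpr
            refine ⟨((c ^ (j+1))⁻¹ * v.1, v.2), ?_, ?_⟩
            · rw [hPmem]
              dsimp only
              rw [he, hcpow]
              have e : (w ^ (j+1) * (p0 * q1⁻¹) ^ (j+1))⁻¹ * (w ^ (j+1) * h)
                  = ((p0 * q1⁻¹) ^ (j+1))⁻¹ * h := by group
              rw [e]
              exact L'.mul_mem (L'.inv_mem (pow_mem ha' _)) hh
            · dsimp only
              rw [mul_inv_cancel_left]
        refine ⟨Q ++ P.map (fun v => (c ^ (j+1) * v.1, v.2)), ?_, ?_, ?_, ?_, ?_⟩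
        · show List.IsChain _ _; rw [List.isChain_append]
          refine ⟨hQch, hblk_ch, ?_⟩
          intro x hx y hy
          rw [hQlst] at hx
          rw [hblk_hd] at hy
          simp only [Option.mem_def, Option.some_inj] at hx hy
          subst hx; subst hy
          show crel D W (c ^ j * p0, false) (c ^ (j+1) * q1, true)
          simp only [crel]
          have e : (c ^ j * p0)⁻¹ * (c ^ (j+1) * q1) = p0⁻¹ * (c * q1) := by
            rw [pow_succ]
            group
          rw [e, hcdef]
          have e2 : p0⁻¹ * (p0 * q1⁻¹ * w * q1) = q1⁻¹ * (w * q1) := by group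
          rw [e2, hc w hwL q1 (hL'L hq1)]
          simpa using hwW
        · refine List.Nodup.append hQnd ?_ ?_
          · refine List.Nodup.map_on ?_ hPnd
            intro x _ y _ hxy
            rw [Prod.ext_iff] at hxy
            obtain ⟨hxy1, hxy2⟩ := hxy
            exact Prod.ext (mul_left_cancel hxy1) hxy2
          · intro v hvQ hvB
            obtain ⟨i, hi, h, hh, he⟩ := (hQmem v).1 hvQ
            obtain ⟨h', hh', he'⟩ := (hblk_mem v).1 hvB
            exact coset_disj L' hmin (show i < j+1 by omega) (by omega) hh hh'
              (he.symm.trans he')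
        · rw [List.head?_append, hQhd]; rfl
        · rw [List.getLast?_append, hblk_lst]; rfl
        · intro v
          rw [List.mem_append, hQmem, hblk_mem]
          constructor
          · rintro (⟨i, hi, h, hh, he⟩ | ⟨h, hh, he⟩)
            · exact ⟨i, by omega, h, hh, he⟩
            · exact ⟨j+1, le_refl _, h, hh, he⟩
          · rintro ⟨i, hi, h, hh, he⟩
            rcases Nat.lt_or_ge i (j+1) with hlt | hge
            · exact Or.inl ⟨i, by omega, h, hh, he⟩
            · have : i = j+1 := by omega
              subst this
              exact Or.inr ⟨h, hh, he⟩
    obtain ⟨Q, hQch, hQnd, hQhd, hQlst, hQmem⟩ := main (d-1) (by omega)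
    refine ⟨Q, q1, c ^ (d-1) * p0, hQch, hQnd, hQhd, hQlst, fun v => ?_⟩
    rw [hQmem v, hLL, coset_decomp L' w hcomm' d hd0 hdH v.1]
    constructor
    · rintro ⟨i, hi, h, hh, he⟩; exact ⟨i, by omega, h, hh, he⟩
    · rintro ⟨i, hi, h, hh, he⟩; exact ⟨i, by omega, h, hh, he⟩
  · -- base case: W = {1}
    push_neg at hw
    have hWW : (W : Set G) * ((W : Set G))⁻¹ ⊆ {1} := by
      intro x hx
      obtain ⟨u, hu, v, hv, rfl⟩ := Set.mem_mul.mp hx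
      have hu1 : u = 1 := hw u (Finset.mem_coe.mp hu)
      have hv1 : v⁻¹ = 1 := hw v⁻¹ (Finset.mem_coe.mp (Set.mem_inv.mp hv))
      have hv1' : v = 1 := by rw [← inv_inv v, hv1, inv_one]
      simp [hu1, hv1']
    have hLD : Subgroup.closure ((D : Set G) ∪ (W : Set G) * ((W : Set G))⁻¹)
        = Subgroup.closure (D : Set G) := by
      apply _root_.le_antisymm
      · rw [Subgroup.closure_le]
        rintro x (hx | hx)
        · exact Subgroup.subset_closure hx
        · have hx1 : x = 1 := hWW hx
          rw [hx1]
          exact (Subgroup.closure (D : Set G)).one_mem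
      · exact Subgroup.closure_mono Set.subset_union_left
    obtain ⟨l, hne, hch, hnd, hmem⟩ := lemA D
      (fun x hx y hy => hc x (hLD.ge hx) y (hLD.ge hy))
    have hh0 : l.head? = some (l.head hne) := List.head?_eq_head hne
    have hlst : l.getLast? = some (l.getLast hne) := List.getLast?_eq_getLast hne
    refine ⟨(l.reverse.map (fun x => (x, true))) ++ l.map (fun x => (x, false)),
      l.getLast hne, l.getLast hne, ?_, ?_, ?_, ?_, ?_⟩
    · show List.IsChain _ _; rw [List.isChain_append]
      refine ⟨?_, ?_, ?_⟩
      · apply (List.isChain_map _).mpr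
        have hrev : l.reverse.Chain' (relA D) :=
          List.isChain_reverse.mpr (hch.imp (fun a b hab => relA_symm hab))
        exact hrev.imp (fun a b hab => ⟨hab.1, hab.2⟩)
      · apply (List.isChain_map _).mpr
        exact hch.imp (fun a b hab => ⟨hab.1, hab.2⟩)
      · intro x hx y hy
        rw [List.getLast?_map, List.getLast?_reverse, hh0] at hx
        rw [List.head?_map, hh0] at hy
        simp only [Option.map_some, Option.mem_def, Option.some_inj] at hx hy
        subst hx; subst hy
        show crel D W (l.head hne, true) (l.head hne, false)
        simp only [crel]
        simpa using hone
    · refine List.Nodup.append ?_ ?_ ?_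
      · exact List.Nodup.map_on (fun x _ y _ h => (Prod.ext_iff.mp h).1)
          (List.nodup_reverse.mpr hnd)
      · exact List.Nodup.map_on (fun x _ y _ h => (Prod.ext_iff.mp h).1) hnd
      · intro p hp1 hp2
        obtain ⟨x, _, rfl⟩ := List.mem_map.mp hp1
        obtain ⟨y, _, hyx⟩ := List.mem_map.mp hp2
        exact Bool.noConfusion (Prod.ext_iff.mp hyx).2
    · rw [List.head?_append, List.head?_map, List.head?_reverse, hlst]; rfl
    · rw [List.getLast?_append, List.getLast?_map, hlst]; rfl
    · intro v
      rw [hLD, List.mem_append]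
      obtain ⟨x, bx⟩ := v
      cases bx
      · constructor
        · rintro (hv | hv)
          · obtain ⟨a, _, hav⟩ := List.mem_map.mp hv
            exact Bool.noConfusion (Prod.ext_iff.mp hav).2
          · obtain ⟨a, ha, hav⟩ := List.mem_map.mp hv
            obtain rfl : a = x := (Prod.ext_iff.mp hav).1
            exact (hmem a).1 ha
        · intro hx
          exact Or.inr (List.mem_map.mpr ⟨x, (hmem x).2 hx, rfl⟩)
      · constructor
        · rintro (hv | hv)
          · obtain ⟨a, ha, hav⟩ := List.mem_map.mp hv
            obtain rfl : a = x := (Prod.ext_iff.mp hav).1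
            exact (hmem a).1 (List.mem_reverse.mp ha)
          · obtain ⟨a, _, hav⟩ := List.mem_map.mp hv
            exact Bool.noConfusion (Prod.ext_iff.mp hav).2
        · intro hx
          exact Or.inl (List.mem_map.mpr ⟨x, List.mem_reverse.mpr ((hmem x).2 hx), rfl⟩)


lemma walk_of_chain {V : Type*} {Γ : SimpleGraph V} :
    ∀ (l : List V) (x : V), List.Chain' Γ.Adj (x :: l) →
    ∃ (v : V) (p : Γ.Walk x v), p.support = x :: l := by
  intro l
  induction l with
  | nil => exact fun x _ => ⟨x, SimpleGraph.Walk.nil, rfl⟩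
  | cons y l ihl =>
    intro x hch
    have hadj : Γ.Adj x y := List.isChain_cons_cons.mp hch |>.1
    obtain ⟨v, p, hp⟩ := ihl y (List.isChain_cons_cons.mp hch).2
    exact ⟨v, SimpleGraph.Walk.cons hadj p, by rw [SimpleGraph.Walk.support_cons, hp]⟩


end GQDHam

open Pointwise in
theorem finite_gqd_hamiltonian_path {G : Type*} [Group G] [Finite G] [DecidableEq G]
    (K : Subgroup G) (b : G) (hGQD : IsGQD K b)
    (S : Set G) (hS1 : (1 : G) ∉ S) (hSgen : Subgroup.closure S = ⊤) :
    ∃ (u v : G) (p : (cayleyGraph S).Walk u v), p.IsHamiltonian := by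
  classical
  open GQDHam in
  obtain ⟨hab, hidx, hbK, -, hinv⟩ := hGQD
  -- index-two facts
  obtain ⟨a0, ha0⟩ := Subgroup.index_eq_two_iff.mp hidx
  have hmul_nn : ∀ x y : G, x ∉ K → y ∉ K → x * y⁻¹ ∈ K := by
    intro x y hx hy
    have hx' : x * a0 ∈ K := by
      rcases ha0 x with ⟨h, -⟩ | ⟨h, -⟩
      · exact h
      · exact absurd h hx
    have hy' : y * a0 ∈ K := by
      rcases ha0 y with ⟨h, -⟩ | ⟨h, -⟩
      · exact h
      · exact absurd h hy
    have : (x * a0) * (y * a0)⁻¹ = x * y⁻¹ := by group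
    exact this ▸ K.mul_mem hx' (K.inv_mem hy')
  have hinv_out : ∀ x : G, x ∉ K → x⁻¹ ∉ K := by
    intro x hx h
    exact hx (by simpa using K.inv_mem h)
  have hmul_out : ∀ x y : G, x ∉ K → y ∉ K → x * y ∈ K := by
    intro x y hx hy
    have := hmul_nn x y⁻¹ hx (hinv_out y hy)
    simpa using this
  have hconj : ∀ x, x ∉ K → ∀ m, m ∈ K → x * m * x⁻¹ = m⁻¹ := by
    intro x hx m hm
    have hk : x * b⁻¹ ∈ K := hmul_nn x b hx hbK
    calc x * m * x⁻¹ = (x * b⁻¹) * (b * m * b⁻¹) * (x * b⁻¹)⁻¹ := by group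
    _ = (x * b⁻¹) * m⁻¹ * (x * b⁻¹)⁻¹ := by rw [hinv m hm]
    _ = m⁻¹ * (x * b⁻¹) * (x * b⁻¹)⁻¹ := by rw [hab _ hk m⁻¹ (K.inv_mem hm)]
    _ = m⁻¹ := by group
  -- symmetrized generating set
  set Sym : Set G := S ∪ S⁻¹ with hSymdef
  have hSym_inv : ∀ x : G, x ∈ Sym → x⁻¹ ∈ Sym := by
    rintro x (hx | hx)
    · exact Or.inr (by rwa [Set.mem_inv, inv_inv])
    · exact Or.inl (Set.mem_inv.mp hx)
  have haex : ∃ x, x ∈ Sym ∧ x ∉ K := by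
    by_contra h
    push_neg at h
    have hMem : ∀ s ∈ S, s ∈ K := fun s hs => h s (Or.inl hs)
    have : (⊤ : Subgroup G) ≤ K := by
      rw [← hSgen, Subgroup.closure_le]
      exact fun s hs => hMem s hs
    have hKtop : K = ⊤ := _root_.le_antisymm le_top this
    rw [hKtop, Subgroup.index_top] at hidx
    exact absurd hidx (by norm_num)
  obtain ⟨a, haS, haK⟩ := haex
  -- the layer and cross generating sets
  set D : Finset G := (Sym ∩ (K : Set G)).toFinite.toFinset with hDdef
  set W : Finset G := ((fun x => x * a⁻¹) '' {x | x ∈ Sym ∧ x ∉ K}).toFinite.toFinset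
    with hWdef
  have hD_mem : ∀ x : G, x ∈ D ↔ x ∈ Sym ∧ x ∈ K := by
    intro x
    rw [hDdef, Set.Finite.mem_toFinset]
    exact Iff.rfl
  have hW_mem : ∀ u : G, u ∈ W ↔ ∃ x, (x ∈ Sym ∧ x ∉ K) ∧ x * a⁻¹ = u := by
    intro u
    rw [hWdef, Set.Finite.mem_toFinset]
    exact Iff.rfl
  have hWK : ∀ u : G, u ∈ W → u ∈ K := by
    intro u hu
    obtain ⟨x, ⟨-, hxK⟩, rfl⟩ := (hW_mem u).1 hu
    exact hmul_nn x a hxK haK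
  have honeW : (1:G) ∈ W := (hW_mem 1).2 ⟨a, ⟨haS, haK⟩, mul_inv_cancel a⟩
  set L := Subgroup.closure ((D : Set G) ∪ (W : Set G) * ((W : Set G))⁻¹) with hLdef
  have hLK : L ≤ K := by
    rw [hLdef, Subgroup.closure_le]
    rintro x (hx | hx)
    · exact ((hD_mem x).1 hx).2
    · obtain ⟨u, hu, v, hv, rfl⟩ := Set.mem_mul.mp hx
      have hu' : u ∈ K := hWK u hu
      have hv' : v⁻¹ ∈ K := hWK v⁻¹ (Set.mem_inv.mp hv)
      have : v ∈ K := by simpa using K.inv_mem hv'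
      exact K.mul_mem hu' this
  have hcL : ∀ x ∈ L, ∀ y ∈ L, x * y = y * x :=
    fun x hx y hy => hab x (hLK hx) y (hLK hy)
  have hWL : ∀ u ∈ W, (u:G) ∈ L := by
    intro u hu
    apply Subgroup.subset_closure
    refine Or.inr (Set.mem_mul.mpr ⟨u, hu, 1, ?_, mul_one u⟩)
    rw [Set.mem_inv, inv_one]
    exact honeW
  have ha2 : a * a ∈ L := by
    apply Subgroup.subset_closure
    refine Or.inr (Set.mem_mul.mpr ⟨1, honeW, a * a, ?_, one_mul _⟩)
    rw [Set.mem_inv]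
    refine (hW_mem _).2 ⟨a⁻¹, ⟨hSym_inv a haS, hinv_out a haK⟩, by group⟩
  -- L = K
  have hKL : ∀ g, g ∈ K → g ∈ L := by
    intro g hg
    let U : Subgroup G :=
      { carrier := {g | g ∈ L ∨ ∃ l ∈ L, g = l * a}
        one_mem' := Or.inl L.one_mem
        mul_mem' := by
          rintro x y (hx | ⟨lx, hlx, rfl⟩) (hy | ⟨ly, hly, rfl⟩)
          · exact Or.inl (L.mul_mem hx hy)
          · exact Or.inr ⟨x * ly, L.mul_mem hx hly, by group⟩
          · refine Or.inr ⟨lx * y⁻¹, L.mul_mem hlx (L.inv_mem hy), ?_⟩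
            have h1 : a * y * a⁻¹ = y⁻¹ := hconj a haK y (hLK hy)
            have h2 : a * y = y⁻¹ * a := by
              rw [← h1]; group
            rw [mul_assoc, h2, mul_assoc]
          · refine Or.inl ?_
            have h1 : a * ly * a⁻¹ = ly⁻¹ := hconj a haK ly (hLK hly)
            have h2 : a * ly = ly⁻¹ * a := by rw [← h1]; group
            have h3 : lx * a * (ly * a) = lx * ly⁻¹ * (a * a) := by
              rw [mul_assoc lx, ← mul_assoc a, h2]
              group
            rw [h3]
            exact L.mul_mem (L.mul_mem hlx (L.inv_mem hly)) ha2
        inv_mem' := by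
          rintro x (hx | ⟨l, hl, rfl⟩)
          · exact Or.inl (L.inv_mem hx)
          · refine Or.inr ⟨l * (a * a)⁻¹, L.mul_mem hl (L.inv_mem ha2), ?_⟩
            have h1 : a⁻¹ * l⁻¹ * a = l := by
              have := hconj a⁻¹ (hinv_out a haK) l⁻¹ (K.inv_mem (hLK hl))
              simpa using this
            have h2 : a⁻¹ * l⁻¹ = l * a⁻¹ := by
              conv_rhs => rw [← h1]
              group
            calc (l * a)⁻¹ = a⁻¹ * l⁻¹ := by group
            _ = l * a⁻¹ := h2
            _ = l * (a * a)⁻¹ * a := by group }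
    have hSU : ∀ s, s ∈ S → s ∈ U := by
      intro s hs
      by_cases hsK : s ∈ K
      · exact Or.inl (Subgroup.subset_closure (Or.inl ((hD_mem s).2 ⟨Or.inl hs, hsK⟩)))
      · refine Or.inr ⟨s * a⁻¹, hWL _ ((hW_mem _).2 ⟨s, ⟨Or.inl hs, hsK⟩, rfl⟩), by group⟩
    have hU : ∀ g : G, g ∈ U := by
      intro g
      have : (⊤ : Subgroup G) ≤ U := by
        rw [← hSgen, Subgroup.closure_le]
        exact fun s hs => hSU s hs
      exact this trivial
    rcases hU g with hgL | ⟨l, hl, rfl⟩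
    · exact hgL
    · exact absurd (by simpa using K.mul_mem (K.inv_mem (hLK hl)) hg) haK
  -- apply the two-level lemma
  obtain ⟨P, q1, p0, hPch, hPnd, hPhd, hPlst, hPmem⟩ := GQDHam.lemC D W honeW hcL
  have hPmemK : ∀ v : G × Bool, v ∈ P ↔ v.1 ∈ K :=
    fun v => (hPmem v).trans ⟨fun h => hLK h, fun h => hKL _ h⟩
  -- decode into the Cayley graph
  set ψ : G × Bool → G := fun v => if v.2 then v.1 * a else v.1 with hψ
  have hstep : ∀ p q : G × Bool, GQDHam.crel D W p q →
      (cayleyGraph S).Adj (ψ p) (ψ q) := by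
    rintro ⟨x, bx⟩ ⟨y, byy⟩ h
    have hDSym : (x⁻¹ * y ∈ D ∨ y⁻¹ * x ∈ D) → x⁻¹ * y ∈ Sym := by
      rintro (hd | hd)
      · exact ((hD_mem _).1 hd).1
      · have h2 := hSym_inv _ ((hD_mem _).1 hd).1
        simpa using h2
    have hDK : (x⁻¹ * y ∈ D ∨ y⁻¹ * x ∈ D) → x⁻¹ * y ∈ K := by
      rintro (hd | hd)
      · exact ((hD_mem _).1 hd).2
      · have h2 := K.inv_mem ((hD_mem _).1 hd).2
        simpa using h2
    cases bx <;> cases byy <;> simp only [GQDHam.crel] at h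
    · -- false false
      refine ⟨h.1, ?_⟩
      simp only [hψ, if_neg (Bool.false_ne_true ∘ Eq.symm)]
      show x⁻¹ * y ∈ S ∪ S⁻¹
      exact hDSym h.2
    · -- false true
      obtain ⟨x', ⟨hx'S, hx'K⟩, hx'⟩ := (hW_mem _).1 h
      have hWmemK : x⁻¹ * y ∈ K := hWK _ h
      constructor
      · intro he
        simp only [hψ] at he
        rw [if_neg (by simp), if_pos trivial] at he
        apply haK
        have ha' : a = y⁻¹ * x := by rw [he]; group
        have : y⁻¹ * x ∈ K := by
          have := K.inv_mem hWmemK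
          simpa using this
        rw [ha']
        exact this
      · simp only [hψ]
        rw [if_neg (by simp), if_pos trivial]
        show x⁻¹ * (y * a) ∈ S ∪ S⁻¹
        have : x⁻¹ * (y * a) = x' := by
          rw [← mul_assoc, ← hx']
          group
        rw [this]
        exact hx'S
    · -- true false
      obtain ⟨x', ⟨hx'S, hx'K⟩, hx'⟩ := (hW_mem _).1 h
      have hWmemK : y⁻¹ * x ∈ K := hWK _ h
      constructor
      · intro he
        simp only [hψ] at he
        rw [if_pos trivial, if_neg (by simp)] at he
        apply haK
        have ha' : a = x⁻¹ * y := by rw [← he]; group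
        have : x⁻¹ * y ∈ K := by
          have := K.inv_mem hWmemK
          simpa using this
        rw [ha']
        exact this
      · simp only [hψ]
        rw [if_pos trivial, if_neg (by simp)]
        show (x * a)⁻¹ * y ∈ S ∪ S⁻¹
        have he1 : x⁻¹ * y = a * x'⁻¹ := by
          have h0 : (x' * a⁻¹)⁻¹ = (y⁻¹ * x)⁻¹ := by rw [hx']
          calc x⁻¹ * y = (y⁻¹ * x)⁻¹ := by group
          _ = (x' * a⁻¹)⁻¹ := h0.symm
          _ = a * x'⁻¹ := by group
        have he2 : (x * a)⁻¹ * y = a⁻¹ * (x⁻¹ * y) := by group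
        have he3 : (x * a)⁻¹ * y = x'⁻¹ := by
          rw [he2, he1]
          group
        rw [he3]
        exact hSym_inv _ hx'S
    · -- true true
      have hmK : x⁻¹ * y ∈ K := hDK h.2
      constructor
      · intro he
        simp only [hψ, if_pos trivial] at he
        exact h.1 (mul_right_cancel he)
      · simp only [hψ, if_pos trivial]
        show (x * a)⁻¹ * (y * a) ∈ S ∪ S⁻¹
        have hconj' : a⁻¹ * (x⁻¹ * y) * a = (x⁻¹ * y)⁻¹ := by
          have := hconj a⁻¹ (hinv_out a haK) (x⁻¹ * y) hmK
          simpa using this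
        have he1 : (x * a)⁻¹ * (y * a) = a⁻¹ * (x⁻¹ * y) * a := by group
        rw [he1, hconj']
        rcases h.2 with hd | hd
        · exact hSym_inv _ ((hD_mem _).1 hd).1
        · have : (x⁻¹ * y)⁻¹ = y⁻¹ * x := by group
          rw [this]
          exact ((hD_mem _).1 hd).1
  have hQch : (P.map ψ).Chain' (cayleyGraph S).Adj :=
    (List.isChain_map ψ).mpr (hPch.imp hstep)
  have hψinj : ∀ v ∈ P, ∀ u ∈ P, ψ v = ψ u → v = u := by
    rintro ⟨x, bx⟩ hv ⟨y, byy⟩ hu he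
    have hxK : x ∈ K := (hPmemK _).1 hv
    have hyK : y ∈ K := (hPmemK _).1 hu
    cases bx <;> cases byy <;> simp only [hψ] at he
    · rw [if_neg (by simp), if_neg (by simp)] at he
      exact Prod.ext he rfl
    · rw [if_neg (by simp), if_pos trivial] at he
      exfalso
      apply haK
      have : a = y⁻¹ * x := by rw [he]; group
      rw [this]
      exact K.mul_mem (K.inv_mem hyK) hxK
    · rw [if_pos trivial, if_neg (by simp)] at he
      exfalso
      apply haK
      have : a = x⁻¹ * y := by rw [← he]; group
      rw [this]
      exact K.mul_mem (K.inv_mem hxK) hyK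
    · rw [if_pos trivial, if_pos trivial] at he
      exact Prod.ext (mul_right_cancel he) rfl
  have hQnd : (P.map ψ).Nodup := List.Nodup.map_on hψinj hPnd
  have hQmem : ∀ g : G, g ∈ P.map ψ := by
    intro g
    by_cases hgK : g ∈ K
    · refine List.mem_map.mpr ⟨(g, false), (hPmemK _).2 hgK, ?_⟩
      simp only [hψ]
      rw [if_neg (by simp)]
    · refine List.mem_map.mpr ⟨(g * a⁻¹, true), (hPmemK _).2 (hmul_nn g a hgK haK), ?_⟩
      simp only [hψ]
      rw [if_pos trivial]
      group
  have hQne : P.map ψ ≠ [] := by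
    intro h
    have h1 := hQmem 1
    rw [h] at h1
    exact List.not_mem_nil h1
  obtain ⟨x0, Q', hQeq⟩ := List.exists_cons_of_ne_nil hQne
  rw [hQeq] at hQch
  obtain ⟨v, p, hp⟩ := GQDHam.walk_of_chain Q' x0 hQch
  refine ⟨x0, v, p, fun g => ?_⟩
  show List.count g p.support = 1
  rw [hp, ← hQeq]
  exact List.count_eq_one_of_mem hQnd (hQmem g)
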